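/- If A is an accretive n×n complex matrix (i.e., Re A = (A+A*)/2 is positive definite), then A is invertible and Re(A⁻¹) ≤ (Re A)⁻¹ in the Loewner order. -/

import Mathlib

open Matrix
open scoped ComplexOrder

noncomputable section
namespace Paper

variable {n : ℕ}

/-- Real part `(A + Aᴴ)/2`. -/
def re (A : Matrix (Fin n) (Fin n) ℂ) : Matrix (Fin n) (Fin n) ℂ := (2⁻¹ : ℂ) • (A + Aᴴ)

/-- Imaginary part `(A - Aᴴ)/(2i)`. -/
def im (A : Matrix (Fin n) (Fin n) ℂ) : Matrix (Fin n) (Fin n) ℂ :=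
  (2 * Complex.I)⁻¹ • (A - Aᴴ)

/-- The sector `S_α`. -/
def sector (α : ℝ) : Set ℂ := {z | 0 < z.re ∧ |z.im| ≤ z.re * Real.tan α}

/-- Numerical range of a matrix. -/
def numericalRange (A : Matrix (Fin n) (Fin n) ℂ) : Set ℂ :=
  {z | ∃ x : Fin n → ℂ, star x ⬝ᵥ x = 1 ∧ z = star x ⬝ᵥ (A *ᵥ x)}

/-- Loewner order: `X ≤ Y` iff `Y - X` is positive semidefinite. -/
def loewnerLE (X Y : Matrix (Fin n) (Fin n) ℂ) : Prop := (Y - X).PosSemidef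

lemma re_isHermitian (A : Matrix (Fin n) (Fin n) ℂ) : (re A).IsHermitian := by
  show ((2⁻¹ : ℂ) • (A + Aᴴ))ᴴ = (2⁻¹ : ℂ) • (A + Aᴴ)
  rw [Matrix.conjTranspose_smul, Matrix.conjTranspose_add,
    Matrix.conjTranspose_conjTranspose, add_comm Aᴴ A]
  simp

/-- The `j`-th largest element of `v` (descending sort). -/
def nthLargest (v : Fin n → ℝ) (j : Fin n) : ℝ :=
  ((List.ofFn v).mergeSort (fun a b => decide (b ≤ a))).get
    (Fin.cast (by simp) j)

/-- `j`-th largest eigenvalue of a Hermitian matrix. -/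
def eigDesc {A : Matrix (Fin n) (Fin n) ℂ} (hA : A.IsHermitian) (j : Fin n) : ℝ :=
  nthLargest hA.eigenvalues j

/-- `j`-th largest singular value. -/
def singular (A : Matrix (Fin n) (Fin n) ℂ) (j : Fin n) : ℝ :=
  nthLargest (fun i => Real.sqrt ((Matrix.isHermitian_conjTranspose_mul_self A).eigenvalues i)) j

/-- Square root of a positive semidefinite matrix (the old `Matrix.PosSemidef.sqrt`). -/
def psdSqrt {A : Matrix (Fin n) (Fin n) ℂ} (hA : A.PosSemidef) : Matrix (Fin n) (Fin n) ℂ :=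
  (hA.1.eigenvectorUnitary : Matrix (Fin n) (Fin n) ℂ) *
    diagonal ((↑) ∘ Real.sqrt ∘ hA.1.eigenvalues) *
    (star hA.1.eigenvectorUnitary : Matrix (Fin n) (Fin n) ℂ)

/-- Weighted geometric mean of positive definite matrices. -/
def sharp (v : ℝ) {A B : Matrix (Fin n) (Fin n) ℂ} (hA : A.PosDef) (hB : B.PosDef) :
    Matrix (Fin n) (Fin n) ℂ :=
  (psdSqrt hA.posSemidef) *
    (Matrix.isHermitian_mul_mul_conjTranspose ((psdSqrt hA.posSemidef))⁻¹ hB.1).cfc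
      (fun x => Real.rpow x v) * (psdSqrt hA.posSemidef)

/-- Weighted arithmetic mean. -/
def arith (v : ℝ) (A B : Matrix (Fin n) (Fin n) ℂ) : Matrix (Fin n) (Fin n) ℂ :=
  (1 - v) • A + v • B

/-- Weighted harmonic mean. -/
def harm (v : ℝ) (A B : Matrix (Fin n) (Fin n) ℂ) : Matrix (Fin n) (Fin n) ℂ :=
  ((1 - v) • A⁻¹ + v • B⁻¹)⁻¹

/-- Kantorovich constant. -/
def K (h : ℝ) : ℝ := (h + 1) ^ 2 / (4 * h)


lemma ker_trivial (A : Matrix (Fin n) (Fin n) ℂ) (hA : (re A).PosDef)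
    (v : Fin n → ℂ) (hv : A *ᵥ v = 0) : v = 0 := by
  by_contra h
  have hpos := hA.dotProduct_mulVec_pos h
  have h1 : star v ⬝ᵥ (A *ᵥ v) = 0 := by rw [hv]; simp
  have h2 : star v ⬝ᵥ (Aᴴ *ᵥ v) = 0 := by
    rw [Matrix.dotProduct_mulVec, ← Matrix.star_mulVec, hv]
    simp
  have : star v ⬝ᵥ (re A *ᵥ v) = 0 := by
    simp only [re, Matrix.smul_mulVec, Matrix.add_mulVec, dotProduct_smul,
      dotProduct_add, h1, h2, add_zero, smul_zero]
  rw [this] at hpos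
  exact lt_irrefl _ hpos

/-- Lin's inequality `Re (A⁻¹) ≤ (Re A)⁻¹` for accretive `A`. -/
theorem re_inv_le_inv_re (A : Matrix (Fin n) (Fin n) ℂ) (hA : (re A).PosDef) :
    IsUnit A.det ∧ loewnerLE (re A⁻¹) (re A)⁻¹ := by
  have hAunit : IsUnit A.det := by
    rw [← Matrix.isUnit_iff_isUnit_det, ← Matrix.mulVec_injective_iff_isUnit]
    intro x y hxy
    have : A *ᵥ (x - y) = 0 := by rw [Matrix.mulVec_sub, hxy, sub_self]
    have := ker_trivial A hA _ this
    linear_combination (norm := abel) this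
  set H := re A with hH
  set K := im A with hKdef
  have hHunit : IsUnit H.det := hA.det_pos.ne'.isUnit
  have hAHunit : IsUnit Aᴴ.det := by
    rw [Matrix.det_conjTranspose]
    exact hAunit.star
  refine ⟨hAunit, ?_⟩
  -- basic facts
  have hHH : Hᴴ = H := (re_isHermitian A).eq
  have hKH : Kᴴ = K := by
    show ((2 * Complex.I)⁻¹ • (A - Aᴴ))ᴴ = (2 * Complex.I)⁻¹ • (A - Aᴴ)
    rw [Matrix.conjTranspose_smul, Matrix.conjTranspose_sub,
      Matrix.conjTranspose_conjTranspose]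
    have : (star (2 * Complex.I)⁻¹ : ℂ) = -(2 * Complex.I)⁻¹ := by
      simp [Complex.ext_iff]
    rw [this, neg_smul, ← smul_neg, neg_sub]
  have hdecomp : A = H + Complex.I • K := by
    show A = (2⁻¹ : ℂ) • (A + Aᴴ) + Complex.I • ((2 * Complex.I)⁻¹ • (A - Aᴴ))
    rw [smul_smul]
    have : Complex.I * (2 * Complex.I)⁻¹ = 2⁻¹ := by
      field_simp
    rw [this]
    ext i j
    simp only [Matrix.add_apply, Matrix.smul_apply, Matrix.sub_apply, smul_eq_mul]
    ring
  have hdecompH : Aᴴ = H - Complex.I • K := by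
    rw [hdecomp, Matrix.conjTranspose_add, Matrix.conjTranspose_smul, hHH, hKH]
    simp [Complex.ext_iff, sub_eq_add_neg]
  -- (1) re A⁻¹ = A⁻¹ * H * A⁻¹ᴴ
  have h1 : re A⁻¹ = A⁻¹ * H * A⁻¹ᴴ := by
    show (2⁻¹ : ℂ) • (A⁻¹ + A⁻¹ᴴ) = A⁻¹ * ((2⁻¹ : ℂ) • (A + Aᴴ)) * A⁻¹ᴴ
    rw [Matrix.mul_smul, Matrix.smul_mul, Matrix.conjTranspose_nonsing_inv]
    congr 1
    rw [Matrix.mul_add, Matrix.add_mul, Matrix.nonsing_inv_mul _ hAunit,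
      Matrix.one_mul, Matrix.mul_assoc, Matrix.mul_nonsing_inv _ hAHunit,
      Matrix.mul_one, add_comm]
  -- (2) A * H⁻¹ * Aᴴ = H + K * H⁻¹ * K
  have h2 : A * H⁻¹ * Aᴴ = H + K * H⁻¹ * K := by
    rw [hdecompH, hdecomp]
    have hc : H * (H⁻¹ * K) = K := by
      rw [← Matrix.mul_assoc, Matrix.mul_nonsing_inv _ hHunit, Matrix.one_mul]
    simp only [hc, smul_add, neg_smul, smul_neg, neg_neg, one_smul, Matrix.add_mul, Matrix.mul_sub, Matrix.mul_add, Matrix.sub_mul,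
      Matrix.smul_mul, Matrix.mul_smul, Matrix.mul_assoc, smul_smul,
      Matrix.nonsing_inv_mul _ hHunit, Matrix.mul_one, Complex.I_mul_I,
      neg_one_smul]
    abel
  -- (3) H⁻¹ - re A⁻¹ = A⁻¹ * (K * H⁻¹ * K) * A⁻¹ᴴ
  have h3 : H⁻¹ - re A⁻¹ = A⁻¹ * (K * (H⁻¹ * (K * A⁻¹ᴴ))) := by
    have e2 : A⁻¹ * (A * H⁻¹ * Aᴴ) * A⁻¹ᴴ = H⁻¹ := by
      rw [Matrix.conjTranspose_nonsing_inv, Matrix.mul_assoc A,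
        ← Matrix.mul_assoc A⁻¹ A, Matrix.nonsing_inv_mul _ hAunit, Matrix.one_mul,
        Matrix.mul_assoc H⁻¹, Matrix.mul_nonsing_inv _ hAHunit, Matrix.mul_one]
    calc H⁻¹ - re A⁻¹
        = A⁻¹ * (A * H⁻¹ * Aᴴ) * A⁻¹ᴴ - A⁻¹ * H * A⁻¹ᴴ := by rw [e2, ← h1]
      _ = A⁻¹ * (K * (H⁻¹ * (K * A⁻¹ᴴ))) := by
          rw [h2]
          noncomm_ring
  -- conclude
  show (H⁻¹ - re A⁻¹).PosSemidef
  rw [h3]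
  have := (hA.inv.posSemidef).conjTranspose_mul_mul_same (K * A⁻¹ᴴ)
  rw [Matrix.conjTranspose_mul, Matrix.conjTranspose_conjTranspose, hKH] at this
  simpa only [Matrix.mul_assoc] using this

end Paper
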